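/- In an HRLQ instance where every resident's preference list has length at most 2 and all hospital quotas are at most 1, if M and M* are feasible envy-free matchings with |M*| > |M|, then there exists an augmenting path P with respect to M such that M ⊕ P is envy-free (an envy-free augmenting path). -/
import Mathlib


/-- An HRLQ instance: bipartite graph on residents `R` and hospitals `H` with
strict preferences encoded as rank functions (lower rank = more preferred)
and lower/upper quotas per hospital. -/
structure HRLQ (R H : Type) where
  E : R → H → Prop
  rPref : R → H → ℕ
  hPref : H → R → ℕ
  lq : H → ℕ
  uq : H → ℕ

namespace HRLQ

variable {R H : Type}

/-- residents matched to hospital `h` -/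
def matchedTo (M : R → Option H) (h : H) : Set R := {r | M r = some h}

/-- size of a matching -/
noncomputable def msize (M : R → Option H) : ℕ := {r | M r ≠ none}.ncard

variable (I : HRLQ R H)

/-- resident `r` strictly prefers hospital `h` to assignment `o`
    (being unmatched is least preferred); `h` must be acceptable to `r`. -/
def PrefersH (r : R) (h : H) (o : Option H) : Prop :=
  I.E r h ∧ ∀ h', o = some h' → I.rPref r h < I.rPref r h'

def IsMatching (M : R → Option H) : Prop :=
  (∀ r h, M r = some h → I.E r h) ∧ ∀ h, (matchedTo M h).ncard ≤ I.uq h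

def Feasible (M : R → Option H) : Prop :=
  ∀ h, I.lq h ≤ (matchedTo M h).ncard

def Blocks (M : R → Option H) (r : R) (h : H) : Prop :=
  I.E r h ∧ M r ≠ some h ∧ I.PrefersH r h (M r) ∧
    ((matchedTo M h).ncard < I.uq h ∨ ∃ r' ∈ matchedTo M h, I.hPref h r < I.hPref h r')

def Stable (M : R → Option H) : Prop := ∀ r h, ¬ I.Blocks M r h

def Envies (M : R → Option H) (r r' : R) : Prop :=
  ∃ h, M r' = some h ∧ I.PrefersH r h (M r) ∧ I.hPref h r < I.hPref h r'

def EnvyFree (M : R → Option H) : Prop := ∀ r r', ¬ I.Envies M r r'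

def RelaxedStable (M : R → Option H) : Prop :=
  (∀ h, {r | r ∈ matchedTo M h ∧ ∃ h', I.Blocks M r h'}.ncard ≤ I.lq h) ∧
  ∀ r, M r = none → ∀ h, ¬ I.Blocks M r h

/-- preferences are strict -/
def StrictPrefs : Prop :=
  (∀ r, Function.Injective (I.rPref r)) ∧ ∀ h, Function.Injective (I.hPref h)

end HRLQ

set_option linter.unusedSectionVars false

namespace EFAP

open HRLQ

variable {R H : Type}

open Classical in
/-- switch matching along a path -/
noncomputable def pswitch (M : R → Option H) (n : ℕ) (rs : ℕ → R) (hs : ℕ → H) :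
    R → Option H :=
  fun r => if h : ∃ i, i ≤ n ∧ rs i = r then some (hs h.choose) else M r

/-- A good (partially M*-aligned) augmenting path. -/
structure GP (I : HRLQ R H) (M Ms : R → Option H) (n : ℕ) (rs : ℕ → R) (hs : ℕ → H) :
    Prop where
  start : M (rs 0) = none
  edge : ∀ i ≤ n, I.E (rs i) (hs i)
  medge : ∀ i < n, M (rs (i + 1)) = some (hs i)
  endfree : ∀ r, M r ≠ some (hs n)
  enduq : 1 ≤ I.uq (hs n)
  align : ∀ i, 1 ≤ i → i ≤ n → Ms (rs i) = some (hs i)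
  anchor : ∃ rstar, Ms rstar = some (hs 0) ∧ I.hPref (hs 0) (rs 0) ≤ I.hPref (hs 0) rstar
  rinj : ∀ i ≤ n, ∀ j ≤ n, rs i = rs j → i = j
  hinj : ∀ i ≤ n, ∀ j ≤ n, hs i = hs j → i = j

section Helpers

variable [Fintype R] [Fintype H] {I : HRLQ R H} {M Ms : R → Option H}

lemma minj (hM : I.IsMatching M) (hq : ∀ h, I.lq h ≤ 1 ∧ I.uq h ≤ 1)
    {r r' : R} {h : H} (h1 : M r = some h) (h2 : M r' = some h) : r = r' := by
  by_contra hne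
  have hsub : ({r, r'} : Set R) ⊆ matchedTo M h := by
    intro x hx
    rcases hx with rfl | hx
    · exact h1
    · rcases hx with rfl; exact h2
  have h2le : 2 ≤ (matchedTo M h).ncard := by
    have := Set.ncard_le_ncard hsub (Set.toFinite _)
    rwa [Set.ncard_pair hne] at this
  have h1le := (hM.2 h).trans (hq h).2
  omega

lemma list3 (hlen : ∀ r, {h | I.E r h}.ncard ≤ 2) {r : R} {h1 h2 h3 : H}
    (e1 : I.E r h1) (e2 : I.E r h2) (e3 : I.E r h3)
    (d12 : h1 ≠ h2) (d13 : h1 ≠ h3) (d23 : h2 ≠ h3) : False := by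
  have hsub : ({h1, h2, h3} : Set H) ⊆ {h | I.E r h} := by
    intro x hx
    simp only [Set.mem_insert_iff, Set.mem_singleton_iff] at hx
    rcases hx with rfl | rfl | rfl <;> assumption
  have h3le : ({h1, h2, h3} : Set H).ncard = 3 := by
    rw [Set.ncard_insert_of_notMem (by simp [d12, d13]) (Set.toFinite _),
      Set.ncard_pair d23]
  have hle := Set.ncard_le_ncard hsub (Set.toFinite _)
  have := hlen r
  omega

/-- strictness helper: from not-preferred and distinct, get strict reverse preference -/
lemma rstrict (hstrict : I.StrictPrefs) {r : R} {h h' : H} (hne : h' ≠ h)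
    (hnlt : ¬ I.rPref r h < I.rPref r h') : I.rPref r h' < I.rPref r h :=
  lt_of_le_of_ne (not_lt.mp hnlt) (fun heq => hne (hstrict.1 r heq))

end Helpers


section Path

variable [Fintype R] [Fintype H] {I : HRLQ R H} {M Ms : R → Option H}
variable {n : ℕ} {rs : ℕ → R} {hs : ℕ → H}

/-- the unique occupant of an on-path hospital -/
lemma occ (hM : I.IsMatching M) (hq : ∀ h, I.lq h ≤ 1 ∧ I.uq h ≤ 1)
    (gp : GP I M Ms n rs hs) {i : ℕ} {r : R} (hi : i ≤ n)
    (hr : M r = some (hs i)) : i < n ∧ r = rs (i + 1) := by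
  rcases lt_or_eq_of_le hi with hlt | rfl
  · exact ⟨hlt, minj hM hq hr (gp.medge i hlt)⟩
  · exact absurd hr (gp.endfree r)

lemma sw_on (gp : GP I M Ms n rs hs) {i : ℕ} (hi : i ≤ n) :
    pswitch M n rs hs (rs i) = some (hs i) := by
  have hex : ∃ j, j ≤ n ∧ rs j = rs i := ⟨i, hi, rfl⟩
  have hsp := hex.choose_spec
  have : hex.choose = i := gp.rinj _ hsp.1 _ hi hsp.2
  unfold pswitch
  rw [dif_pos hex, this]

lemma sw_off {r : R} (hr : ∀ i ≤ n, r ≠ rs i) :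
    pswitch M n rs hs r = M r := by
  unfold pswitch
  rw [dif_neg]
  rintro ⟨i, hi, rfl⟩
  exact hr i hi rfl

lemma sw_cases (r : R) :
    (∃ i ≤ n, rs i = r) ∨ ((∀ i ≤ n, r ≠ rs i) ∧ pswitch M n rs hs r = M r) := by
  by_cases hex : ∃ i ≤ n, rs i = r
  · exact Or.inl hex
  · push_neg at hex
    refine Or.inr ⟨fun i hi he => hex i hi he.symm, sw_off ?_⟩
    exact fun i hi he => hex i hi he.symm

lemma sw_matched_on (hM : I.IsMatching M) (hq : ∀ h, I.lq h ≤ 1 ∧ I.uq h ≤ 1)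
    (gp : GP I M Ms n rs hs) {i : ℕ} (hi : i ≤ n) :
    matchedTo (pswitch M n rs hs) (hs i) = {rs i} := by
  ext r
  simp only [matchedTo, Set.mem_setOf_eq, Set.mem_singleton_iff]
  constructor
  · intro hr
    rcases sw_cases (rs := rs) (hs := hs) (n := n) (M := M) r with ⟨j, hj, rfl⟩ | ⟨hoff, heq⟩
    · rw [sw_on gp hj] at hr
      have : j = i := gp.hinj _ hj _ hi (by injection hr)
      rw [this]
    · rw [heq] at hr
      obtain ⟨hlt, rfl⟩ := occ hM hq gp hi hr
      exact absurd rfl (hoff (i + 1) hlt)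
  · rintro rfl
    exact sw_on gp hi

lemma sw_matched_off (gp : GP I M Ms n rs hs) {h' : H}
    (hh : ∀ i ≤ n, h' ≠ hs i) :
    matchedTo (pswitch M n rs hs) h' = matchedTo M h' := by
  ext r
  simp only [matchedTo, Set.mem_setOf_eq]
  rcases sw_cases (rs := rs) (hs := hs) (n := n) (M := M) r with ⟨j, hj, rfl⟩ | ⟨hoff, heq⟩
  · rw [sw_on gp hj]
    constructor
    · intro hr; exact absurd (by injection hr) (Ne.symm (hh j hj))
    · intro hr
      rcases Nat.eq_zero_or_pos j with rfl | hjpos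
      · rw [gp.start] at hr; exact absurd hr (by simp)
      · obtain ⟨m, rfl⟩ := Nat.exists_eq_succ_of_ne_zero (Nat.pos_iff_ne_zero.mp hjpos)
        rw [gp.medge m (by omega)] at hr
        exact absurd (by injection hr) (Ne.symm (hh m (by omega)))
  · rw [heq]

lemma uq_pos (hM : I.IsMatching M) (gp : GP I M Ms n rs hs) {i : ℕ} (hi : i ≤ n) :
    1 ≤ I.uq (hs i) := by
  rcases lt_or_eq_of_le hi with hlt | rfl
  · have hmem : rs (i + 1) ∈ matchedTo M (hs i) := gp.medge i hlt
    have hpos : 0 < (matchedTo M (hs i)).ncard :=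
      (Set.ncard_pos (Set.toFinite _)).mpr ⟨_, hmem⟩
    have := hM.2 (hs i)
    omega
  · exact gp.enduq

lemma sw_matching (hM : I.IsMatching M) (hq : ∀ h, I.lq h ≤ 1 ∧ I.uq h ≤ 1)
    (gp : GP I M Ms n rs hs) : I.IsMatching (pswitch M n rs hs) := by
  constructor
  · intro r h hr
    rcases sw_cases (rs := rs) (hs := hs) (n := n) (M := M) r with ⟨j, hj, rfl⟩ | ⟨hoff, heq⟩
    · rw [sw_on gp hj] at hr
      rw [← Option.some_inj.mp hr]
      exact gp.edge j hj
    · rw [heq] at hr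
      exact hM.1 r h hr
  · intro h
    by_cases hh : ∃ i ≤ n, h = hs i
    · obtain ⟨i, hi, rfl⟩ := hh
      rw [sw_matched_on hM hq gp hi, Set.ncard_singleton]
      exact uq_pos hM gp hi
    · push_neg at hh
      rw [sw_matched_off gp hh]
      exact hM.2 h

lemma sw_feasible (hM : I.IsMatching M) (hq : ∀ h, I.lq h ≤ 1 ∧ I.uq h ≤ 1)
    (hMfeas : I.Feasible M) (gp : GP I M Ms n rs hs) :
    I.Feasible (pswitch M n rs hs) := by
  intro h
  by_cases hh : ∃ i ≤ n, h = hs i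
  · obtain ⟨i, hi, rfl⟩ := hh
    rw [sw_matched_on hM hq gp hi, Set.ncard_singleton]
    exact (hq (hs i)).1
  · push_neg at hh
    rw [sw_matched_off gp hh]
    exact hMfeas h

end Path


section Main

variable [Fintype R] [Fintype H] {I : HRLQ R H} {M Ms : R → Option H}

lemma main (hstrict : I.StrictPrefs) (hlen : ∀ r, {h | I.E r h}.ncard ≤ 2)
    (hq : ∀ h, I.lq h ≤ 1 ∧ I.uq h ≤ 1)
    (hM : I.IsMatching M) (hMef : I.EnvyFree M)
    (hMs : I.IsMatching Ms) (hMsef : I.EnvyFree Ms) :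
    ∀ n k : ℕ, ∀ rs hs, GP I M Ms n rs hs → I.hPref (hs 0) (rs 0) ≤ k →
    ∃ n' rs' hs', GP I M Ms n' rs' hs' ∧ I.EnvyFree (pswitch M n' rs' hs') := by
  intro n
  induction n using Nat.strong_induction_on with
  | _ n IHn =>
  intro k
  induction k using Nat.strong_induction_on with
  | _ k IHk =>
  intro rs hs gp hk
  by_cases hef : I.EnvyFree (pswitch M n rs hs)
  · exact ⟨n, rs, hs, gp, hef⟩
  -- extract an envious pair
  simp only [HRLQ.EnvyFree, not_forall, not_not] at hef
  obtain ⟨r, r', h, hM'r', hpref, hhp⟩ := hef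
  have hE : I.E r h := hpref.1
  -- Step 1: the envied resident is on the path
  have hr'on : ∃ j ≤ n, rs j = r' := by
    by_contra hoff
    push_neg at hoff
    have hoff' : ∀ i ≤ n, r' ≠ rs i := fun i hi he => hoff i hi he.symm
    have hMr' : M r' = some h := by
      rw [sw_off (M := M) hoff'] at hM'r'; exact hM'r'
    rcases sw_cases (rs := rs) (hs := hs) (n := n) (M := M) r with ⟨i, hi, rfl⟩ | ⟨hroff, heq⟩
    · rcases Nat.eq_zero_or_pos i with rfl | hipos
      · exact hMef (rs 0) r'
          ⟨h, hMr', ⟨hE, fun h' hh' => by rw [gp.start] at hh'; cases hh'⟩, hhp⟩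
      · obtain ⟨m, rfl⟩ := Nat.exists_eq_succ_of_ne_zero (Nat.pos_iff_ne_zero.mp hipos)
        have hMr : M (rs (m + 1)) = some (hs m) := gp.medge m (by omega)
        have hd1 : h ≠ hs m := by
          rintro rfl
          exact hoff' (m + 1) hi (minj hM hq hMr' hMr)
        have hd2 : h ≠ hs (m + 1) := by
          rintro rfl
          obtain ⟨hlt2, hre⟩ := occ hM hq gp hi hMr'
          exact hoff' (m + 2) (by omega) hre
        have hd3 : hs m ≠ hs (m + 1) := fun he => by
          have := gp.hinj m (by omega) (m + 1) hi he; omega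
        exact list3 hlen hE (hM.1 _ _ hMr) (gp.edge (m + 1) hi) hd1 hd2 hd3
    · have hpref2 : I.PrefersH r h (M r) := by rw [← heq]; exact hpref
      exact hMef r r' ⟨h, hMr', hpref2, hhp⟩
  obtain ⟨j, hj, rfl⟩ := hr'on
  have hhsj : h = hs j := by
    have hsw := sw_on gp hj
    rw [hM'r'] at hsw
    exact Option.some_inj.mp hsw
  subst hhsj
  -- Step 2: case on whether the envier is on the path
  rcases sw_cases (rs := rs) (hs := hs) (n := n) (M := M) r with ⟨i, hi, rfl⟩ | ⟨hroff, heq⟩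
  · -- envier rs i on path: always a contradiction
    exfalso
    have hij : i ≠ j := by rintro rfl; exact lt_irrefl _ hhp
    have hlt : I.rPref (rs i) (hs j) < I.rPref (rs i) (hs i) :=
      hpref.2 (hs i) (sw_on gp hi)
    rcases Nat.eq_zero_or_pos i with rfl | hipos
    · -- i = 0, so j ≥ 1
      have hj1 : 1 ≤ j := by omega
      by_cases hp : I.PrefersH (rs 0) (hs j) (Ms (rs 0))
      · exact hMsef (rs 0) (rs j) ⟨hs j, gp.align j hj1 hj, hp, hhp⟩
      · rw [HRLQ.PrefersH] at hp; push_neg at hp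
        obtain ⟨h'', hMs0, hnlt⟩ := hp hE
        have hne1 : h'' ≠ hs j := by
          rintro rfl
          have := minj hMs hq hMs0 (gp.align j hj1 hj)
          have := gp.rinj 0 (by omega) j hj this
          omega
        by_cases hne0 : h'' = hs 0
        · subst hne0
          exact absurd hlt (by omega)
        · have hd3 : hs j ≠ hs 0 := fun he => by
            have := gp.hinj j hj 0 (by omega) he; omega
          exact list3 hlen (hMs.1 _ _ hMs0) hE (gp.edge 0 (by omega)) hne1 hne0 hd3
    · obtain ⟨m, rfl⟩ := Nat.exists_eq_succ_of_ne_zero (Nat.pos_iff_ne_zero.mp hipos)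
      by_cases hjm : j = m
      · subst hjm
        rcases Nat.eq_zero_or_pos j with rfl | hm1
        · -- i = 1, j = 0 : use the anchor
          obtain ⟨rstar, hrst, hle⟩ := gp.anchor
          refine hMsef (rs 1) rstar ⟨hs 0, hrst, ⟨hE, fun h' hh' => ?_⟩,
            lt_of_lt_of_le hhp hle⟩
          rw [gp.align 1 (by omega) hi] at hh'
          injection hh' with hh'
          rw [← hh']
          exact hlt
        · -- i = m+1, j = m ≥ 1 : envy in Ms
          refine hMsef (rs (j + 1)) (rs j)
            ⟨hs j, gp.align j hm1 (by omega), ⟨hE, fun h' hh' => ?_⟩, hhp⟩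
          rw [gp.align (j + 1) (by omega) hi] at hh'
          injection hh' with hh'
          rw [← hh']
          exact hlt
      · -- j ∉ {m, m+1} : three distinct acceptable hospitals
        have hd1 : hs j ≠ hs m := fun he => by
          have := gp.hinj j hj m (by omega) he; omega
        have hd2 : hs j ≠ hs (m + 1) := fun he => by
          have := gp.hinj j hj (m + 1) hi he; omega
        have hd3 : hs m ≠ hs (m + 1) := fun he => by
          have := gp.hinj m (by omega) (m + 1) hi he; omega
        exact list3 hlen hE (hM.1 _ _ (gp.medge m (by omega))) (gp.edge (m + 1) hi)
          hd1 hd2 hd3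
  · -- envier r off the path
    rw [heq] at hpref
    by_cases hp : I.PrefersH r (hs j) (Ms r)
    · exfalso
      rcases Nat.eq_zero_or_pos j with rfl | hj1
      · obtain ⟨rstar, hrst, hle⟩ := gp.anchor
        exact hMsef r rstar ⟨hs 0, hrst, hp, lt_of_lt_of_le hhp hle⟩
      · exact hMsef r (rs j) ⟨hs j, gp.align j hj1 hj, hp, hhp⟩
    · rw [HRLQ.PrefersH] at hp; push_neg at hp
      obtain ⟨h'', hMsr, hnlt⟩ := hp hE
      have hne1 : h'' ≠ hs j := by
        rintro rfl
        rcases Nat.eq_zero_or_pos j with rfl | hj1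
        · obtain ⟨rstar, hrst, hle⟩ := gp.anchor
          have hr : r = rstar := minj hMs hq hMsr hrst
          rw [hr] at hhp
          omega
        · exact hroff j hj (minj hMs hq hMsr (gp.align j hj1 hj))
      have hstrlt : I.rPref r h'' < I.rPref r (hs j) :=
        lt_of_le_of_ne hnlt (fun heq => hne1 (hstrict.1 r heq))
      have hMrnone : M r = none := by
        cases hMr : M r with
        | none => rfl
        | some h2 =>
          have hlt2 : I.rPref r (hs j) < I.rPref r h2 := hpref.2 h2 hMr
          have d13 : h'' ≠ h2 := by rintro rfl; omega
          have d23 : hs j ≠ h2 := by rintro rfl; omega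
          exact (list3 hlen (hMs.1 _ _ hMsr) hE (hM.1 _ _ hMr) hne1 d13 d23).elim
      -- reroute the path at position j
      set rs2 : ℕ → R := fun i => if i = 0 then r else rs (j + i) with hrs2
      set hs2 : ℕ → H := fun i => hs (j + i) with hhs2
      have hrs20 : rs2 0 = r := by simp [hrs2]
      have hrs2s : ∀ i, 1 ≤ i → rs2 i = rs (j + i) := by
        intro i hi1; simp [hrs2]; omega
      have hhs2i : ∀ i, hs2 i = hs (j + i) := fun i => rfl
      have gp2 : GP I M Ms (n - j) rs2 hs2 := by
        refine ⟨?_, ?_, ?_, ?_, ?_, ?_, ?_, ?_, ?_⟩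
        · rw [hrs20]; exact hMrnone
        · intro i hi
          rcases Nat.eq_zero_or_pos i with rfl | hi1
          · rw [hrs20, hhs2i]
            simpa using hE
          · rw [hrs2s i hi1, hhs2i]
            exact gp.edge (j + i) (by omega)
        · intro i hilt
          rw [hrs2s (i + 1) (by omega), hhs2i]
          have : j + (i + 1) = (j + i) + 1 := by omega
          rw [this]
          exact gp.medge (j + i) (by omega)
        · intro r0
          rw [hhs2i]
          have : j + (n - j) = n := by omega
          rw [this]
          exact gp.endfree r0
        · rw [hhs2i]
          have : j + (n - j) = n := by omega
          rw [this]
          exact gp.enduq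
        · intro i hi1 hin
          rw [hrs2s i hi1, hhs2i]
          exact gp.align (j + i) (by omega) (by omega)
        · rw [hrs20, hhs2i]
          simp only [Nat.add_zero]
          rcases Nat.eq_zero_or_pos j with rfl | hj1
          · obtain ⟨rstar, hrst, hle⟩ := gp.anchor
            exact ⟨rstar, hrst, le_of_lt (lt_of_lt_of_le hhp hle)⟩
          · exact ⟨rs j, gp.align j hj1 hj, le_of_lt hhp⟩
        · intro a ha b hb hab
          rcases Nat.eq_zero_or_pos a with rfl | ha1 <;>
            rcases Nat.eq_zero_or_pos b with rfl | hb1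
          · rfl
          · rw [hrs20, hrs2s b hb1] at hab
            exact absurd hab (hroff (j + b) (by omega))
          · rw [hrs20, hrs2s a ha1] at hab
            exact absurd hab.symm (hroff (j + a) (by omega))
          · rw [hrs2s a ha1, hrs2s b hb1] at hab
            have := gp.rinj (j + a) (by omega) (j + b) (by omega) hab
            omega
        · intro a ha b hb hab
          rw [hhs2i, hhs2i] at hab
          have := gp.hinj (j + a) (by omega) (j + b) (by omega) hab
          omega
      rcases Nat.eq_zero_or_pos j with rfl | hj1
      · -- same length, strictly better anchored rank: inner induction
        have hn0 : n - 0 = n := by omega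
        rw [hn0] at gp2
        have hklt : I.hPref (hs 0) r < k := lt_of_lt_of_le hhp hk
        refine IHk (I.hPref (hs 0) r) hklt rs2 hs2 gp2 ?_
        rw [hrs20, hhs2i]
      · -- strictly shorter path: outer induction
        exact IHn (n - j) (by omega) (I.hPref (hs2 0) (rs2 0)) rs2 hs2 gp2 le_rfl

end Main


section Exist

variable [Fintype R] [Fintype H] {I : HRLQ R H} {M Ms : R → Option H}

/-- a fully M*-aligned alternating pre-path -/
def PreP (M Ms : R → Option H) (n : ℕ) (rs : ℕ → R) (hs : ℕ → H) : Prop :=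
  M (rs 0) = none ∧ (∀ i ≤ n, Ms (rs i) = some (hs i)) ∧
    (∀ i < n, M (rs (i + 1)) = some (hs i))

lemma back (hMs : I.IsMatching Ms) (hq : ∀ h, I.lq h ≤ 1 ∧ I.uq h ≤ 1)
    {n n' : ℕ} {rs rs' : ℕ → R} {hs hs' : ℕ → H}
    (p : PreP M Ms n rs hs) (p' : PreP M Ms n' rs' hs') :
    ∀ a, a ≤ n → ∀ b, b ≤ n' → rs a = rs' b → a ≤ b ∧ rs 0 = rs' (b - a) := by
  intro a
  induction a with
  | zero => intro _ b hb he; exact ⟨Nat.zero_le _, by simpa using he⟩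
  | succ a ih =>
    intro ha b hb he
    cases b with
    | zero =>
      exfalso
      have h1 : M (rs (a + 1)) = some (hs a) := p.2.2 a (by omega)
      rw [he, p'.1] at h1
      cases h1
    | succ c =>
      have h1 : M (rs (a + 1)) = some (hs a) := p.2.2 a (by omega)
      have h2 : M (rs' (c + 1)) = some (hs' c) := p'.2.2 c (by omega)
      rw [he, h2] at h1
      have hhz : hs' c = hs a := Option.some_inj.mp h1
      have h3 : Ms (rs a) = some (hs' c) := by rw [p.2.1 a (by omega), hhz]
      have h4 := minj hMs hq h3 (p'.2.1 c (by omega))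
      obtain ⟨hle, h0⟩ := ih (by omega) c (by omega) h4
      have hsub : c + 1 - (a + 1) = c - a := by omega
      rw [hsub]
      exact ⟨by omega, h0⟩

lemma start_eq (hMs : I.IsMatching Ms) (hq : ∀ h, I.lq h ≤ 1 ∧ I.uq h ≤ 1)
    {n n' : ℕ} {rs rs' : ℕ → R} {hs hs' : ℕ → H}
    (p : PreP M Ms n rs hs) (p' : PreP M Ms n' rs' hs')
    {a b : ℕ} (ha : a ≤ n) (hb : b ≤ n') (he : rs a = rs' b) :
    a = b ∧ rs 0 = rs' 0 := by
  obtain ⟨hab, h0⟩ := back hMs hq p p' a ha b hb he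
  obtain ⟨hba, _⟩ := back hMs hq p' p b hb a ha he.symm
  have habeq : a = b := le_antisymm hab hba
  subst habeq
  rw [Nat.sub_self] at h0
  exact ⟨rfl, h0⟩

lemma fuel (hMs : I.IsMatching Ms) (hq : ∀ h, I.lq h ≤ 1 ∧ I.uq h ≤ 1) :
    ∀ d n (rs : ℕ → R) (hs : ℕ → H), PreP M Ms n rs hs → Fintype.card R < n + 1 + d →
    (∃ n' rs' hs', PreP M Ms n' rs' hs' ∧ ∀ r, M r ≠ some (hs' n')) ∨
    (∃ e, M e ≠ none ∧ Ms e = none ∧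
      ∃ n' rs' hs', PreP M Ms n' rs' hs' ∧ rs' 0 = rs 0 ∧ M e = some (hs' n')) := by
  intro d
  induction d with
  | zero =>
    intro n rs hs p hcard
    exfalso
    have hinj : Function.Injective (fun i : Fin (n + 1) => rs i.val) := by
      intro a b he
      exact Fin.ext (start_eq hMs hq p p (Nat.lt_succ_iff.mp a.isLt)
        (Nat.lt_succ_iff.mp b.isLt) he).1
    have := Fintype.card_le_of_injective _ hinj
    rw [Fintype.card_fin] at this
    omega
  | succ d ih =>
    intro n rs hs p hcard
    by_cases hocc : ∃ r, M r = some (hs n)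
    · obtain ⟨e, he⟩ := hocc
      cases hMse : Ms e with
      | none =>
        right
        exact ⟨e, by rw [he]; simp, hMse, n, rs, hs, p, rfl, he⟩
      | some h' =>
        set rs' : ℕ → R := fun i => if i ≤ n then rs i else e with hrs'
        set hs' : ℕ → H := fun i => if i ≤ n then hs i else h' with hhs'
        have hr'lo : ∀ i ≤ n, rs' i = rs i := by intro i hi; simp [hrs', hi]
        have hh'lo : ∀ i ≤ n, hs' i = hs i := by intro i hi; simp [hhs', hi]
        have hr'hi : rs' (n + 1) = e := by simp [hrs']
        have hh'hi : hs' (n + 1) = h' := by simp [hhs']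
        have p' : PreP M Ms (n + 1) rs' hs' := by
          refine ⟨?_, ?_, ?_⟩
          · rw [hr'lo 0 (by omega)]; exact p.1
          · intro i hi
            rcases Nat.lt_or_ge i (n + 1) with hlt | hge
            · rw [hr'lo i (by omega), hh'lo i (by omega)]
              exact p.2.1 i (by omega)
            · have : i = n + 1 := by omega
              rw [this, hr'hi, hh'hi]
              exact hMse
          · intro i hi
            rcases Nat.lt_or_ge i n with hlt | hge
            · rw [hr'lo (i + 1) (by omega), hh'lo i (by omega)]
              exact p.2.2 i hlt
            · have : i = n := by omega
              rw [this, hr'hi, hh'lo n (by omega)]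
              exact he
        rcases ih (n + 1) rs' hs' p' (by omega) with hl | ⟨e2, h1, h2, n2, rs2, hs2, p2, h02, h3⟩
        · exact Or.inl hl
        · right
          exact ⟨e2, h1, h2, n2, rs2, hs2, p2, by rw [h02, hr'lo 0 (by omega)], h3⟩
    · push_neg at hocc
      exact Or.inl ⟨n, rs, hs, p, hocc⟩

lemma exists_success (hMs : I.IsMatching Ms) (hq : ∀ h, I.lq h ≤ 1 ∧ I.uq h ≤ 1)
    (hsize : msize M < msize Ms) :
    ∃ n rs hs, PreP M Ms n rs hs ∧ ∀ r, M r ≠ some (hs n) := by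
  by_contra hno
  push_neg at hno
  have hfail : ∀ r0 : R, M r0 = none → Ms r0 ≠ none →
      ∃ e, M e ≠ none ∧ Ms e = none ∧
        ∃ n' rs' hs', PreP M Ms n' rs' hs' ∧ rs' 0 = r0 ∧ M e = some (hs' n') := by
    intro r0 h0 hms0
    cases hMs0 : Ms r0 with
    | none => exact absurd hMs0 hms0
    | some h0' =>
      have p0 : PreP M Ms 0 (fun _ => r0) (fun _ => h0') :=
        ⟨h0, fun i _ => hMs0, fun i hi => by omega⟩
      rcases fuel hMs hq (Fintype.card R) 0 _ _ p0 (by omega) with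
        ⟨n', rs', hs', p', hfree⟩ | hr
      · obtain ⟨rr, hrr⟩ := hno n' rs' hs' p'
        exact absurd hrr (hfree rr)
      · exact hr
  classical
  set A : Set R := {r | M r = none ∧ Ms r ≠ none} with hA
  set B : Set R := {r | M r ≠ none ∧ Ms r = none} with hB
  set f : R → R := fun r0 =>
    if hx : M r0 = none ∧ Ms r0 ≠ none then (hfail r0 hx.1 hx.2).choose else r0 with hf
  have hfspec : ∀ r0, ∀ hx : M r0 = none ∧ Ms r0 ≠ none,
      M (f r0) ≠ none ∧ Ms (f r0) = none ∧
      ∃ n' rs' hs', PreP M Ms n' rs' hs' ∧ rs' 0 = r0 ∧ M (f r0) = some (hs' n') := by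
    intro r0 hx
    have he : f r0 = (hfail r0 hx.1 hx.2).choose := dif_pos hx
    rw [he]
    exact (hfail r0 hx.1 hx.2).choose_spec
  have hmaps : ∀ r0 ∈ A, f r0 ∈ B := by
    intro r0 hr0
    obtain ⟨h1, h2, _⟩ := hfspec r0 hr0
    exact ⟨h1, h2⟩
  have hinj : Set.InjOn f A := by
    intro r0 h0 r1 h1 hfe
    obtain ⟨_, _, n0, rs0, hs0, p0, h00, hend0⟩ := hfspec r0 h0
    obtain ⟨_, _, n1, rs1, hs1, p1, h01, hend1⟩ := hfspec r1 h1
    rw [hfe, hend1] at hend0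
    have hhe : hs1 n1 = hs0 n0 := Option.some_inj.mp hend0
    have h3 : Ms (rs0 n0) = some (hs1 n1) := by rw [p0.2.1 n0 le_rfl, hhe]
    have h4 := minj hMs hq h3 (p1.2.1 n1 le_rfl)
    have h5 := (start_eq hMs hq p0 p1 le_rfl le_rfl h4).2
    rw [h00, h01] at h5
    exact h5
  have hAB := Set.ncard_le_ncard_of_injOn f hmaps hinj (Set.toFinite _)
  have hsplit1 : {r | Ms r ≠ none} = {r | M r ≠ none ∧ Ms r ≠ none} ∪ A := by
    ext x
    simp only [Set.mem_setOf_eq, Set.mem_union, hA]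
    by_cases hx : M x = none <;> tauto
  have hsplit2 : {r | M r ≠ none} = {r | M r ≠ none ∧ Ms r ≠ none} ∪ B := by
    ext x
    simp only [Set.mem_setOf_eq, Set.mem_union, hB]
    by_cases hx : Ms x = none <;> tauto
  have hd1 : Disjoint {r | M r ≠ none ∧ Ms r ≠ none} A := by
    rw [Set.disjoint_left]
    rintro x ⟨hx1, _⟩ ⟨hx3, _⟩
    exact hx1 hx3
  have hd2 : Disjoint {r | M r ≠ none ∧ Ms r ≠ none} B := by
    rw [Set.disjoint_left]
    rintro x ⟨_, hx2⟩ ⟨_, hx4⟩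
    exact hx2 hx4
  rw [msize, msize, hsplit1, hsplit2,
    Set.ncard_union_eq hd1 (Set.toFinite _) (Set.toFinite _),
    Set.ncard_union_eq hd2 (Set.toFinite _) (Set.toFinite _)] at hsize
  omega

lemma gp_of_success (hMs : I.IsMatching Ms) (hq : ∀ h, I.lq h ≤ 1 ∧ I.uq h ≤ 1)
    {n : ℕ} {rs : ℕ → R} {hs : ℕ → H} (p : PreP M Ms n rs hs)
    (hfree : ∀ r, M r ≠ some (hs n)) : GP I M Ms n rs hs := by
  have rinj : ∀ i ≤ n, ∀ j ≤ n, rs i = rs j → i = j :=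
    fun i hi j hj he => (start_eq hMs hq p p hi hj he).1
  refine ⟨p.1, fun i hi => hMs.1 _ _ (p.2.1 i hi), p.2.2, hfree, ?_,
    fun i _ hi => p.2.1 i hi, ⟨rs 0, p.2.1 0 (Nat.zero_le n), le_rfl⟩, rinj, ?_⟩
  · have hmem : rs n ∈ matchedTo Ms (hs n) := p.2.1 n le_rfl
    have hpos : 0 < (matchedTo Ms (hs n)).ncard :=
      (Set.ncard_pos (Set.toFinite _)).mpr ⟨_, hmem⟩
    have := hMs.2 (hs n)
    omega
  · intro i hi j hj he
    have h3 : Ms (rs i) = some (hs j) := by rw [p.2.1 i hi, he]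
    exact rinj i hi j hj (minj hMs hq h3 (p.2.1 j hj))

end Exist

end EFAP
/-- In an HRLQ instance with resident lists of length at most 2 and all quotas at
most 1, if M and M* are feasible envy-free matchings with |M*| > |M|, then there
is an augmenting path P w.r.t. M (from an unmatched resident to an
under-subscribed hospital) whose switch M ⊕ P is again a feasible envy-free
matching. -/


theorem exists_envy_free_augmenting_path
    {R H : Type} [Fintype R] [Fintype H] (I : HRLQ R H)
    (hstrict : I.StrictPrefs)
    (hlen : ∀ r, {h | I.E r h}.ncard ≤ 2)
    (hq : ∀ h, I.lq h ≤ 1 ∧ I.uq h ≤ 1)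
    (M Mstar : R → Option H)
    (hM : I.IsMatching M ∧ I.Feasible M ∧ I.EnvyFree M)
    (hMstar : I.IsMatching Mstar ∧ I.Feasible Mstar ∧ I.EnvyFree Mstar)
    (hsize : HRLQ.msize M < HRLQ.msize Mstar) :
    ∃ (n : ℕ) (rs : Fin (n + 1) → R) (hs : Fin (n + 1) → H),
      Function.Injective rs ∧ Function.Injective hs ∧
      -- P starts at a resident unmatched in M
      M (rs 0) = none ∧
      -- the non-M edges of P are edges of the instance
      (∀ i, I.E (rs i) (hs i)) ∧
      -- the M-edges of P
      (∀ i : Fin n, M (rs i.succ) = some (hs i.castSucc)) ∧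
      -- P ends at a hospital under-subscribed in M
      (HRLQ.matchedTo M (hs (Fin.last n))).ncard < I.uq (hs (Fin.last n)) ∧
      -- M ⊕ P is a feasible envy-free matching
      (∃ M', (∀ i, M' (rs i) = some (hs i)) ∧
        (∀ r, (∀ i, r ≠ rs i) → M' r = M r) ∧
        I.IsMatching M' ∧ I.Feasible M' ∧ I.EnvyFree M') := by
  classical
  obtain ⟨hMm, hMf, hMef⟩ := hM
  obtain ⟨hMsm, _, hMsef⟩ := hMstar
  obtain ⟨n0, rs0, hs0, p0, hfree0⟩ := EFAP.exists_success hMsm hq hsize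
  have gp0 : EFAP.GP I M Mstar n0 rs0 hs0 := EFAP.gp_of_success hMsm hq p0 hfree0
  obtain ⟨n, rs, hs, gp, hef⟩ :=
    EFAP.main hstrict hlen hq hMm hMef hMsm hMsef n0 (I.hPref (hs0 0) (rs0 0)) rs0 hs0 gp0 le_rfl
  refine ⟨n, fun i => rs i.val, fun i => hs i.val, ?_, ?_, ?_, ?_, ?_, ?_, ?_⟩
  · intro a b he
    exact Fin.ext (gp.rinj a.val (Nat.lt_succ_iff.mp a.isLt) b.val (Nat.lt_succ_iff.mp b.isLt) he)
  · intro a b he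
    exact Fin.ext (gp.hinj a.val (Nat.lt_succ_iff.mp a.isLt) b.val (Nat.lt_succ_iff.mp b.isLt) he)
  · exact gp.start
  · exact fun i => gp.edge i.val (Nat.lt_succ_iff.mp i.isLt)
  · intro i
    exact gp.medge i.val i.isLt
  · have hempty : HRLQ.matchedTo M (hs ((Fin.last n) : Fin (n + 1)).val) = ∅ := by
      ext r
      simp only [HRLQ.matchedTo, Set.mem_setOf_eq, Set.mem_empty_iff_false, iff_false]
      exact gp.endfree r
    rw [hempty, Set.ncard_empty]
    exact gp.enduq
  · refine ⟨EFAP.pswitch M n rs hs, ?_, ?_,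
      EFAP.sw_matching hMm hq gp, EFAP.sw_feasible hMm hq hMf gp, hef⟩
    · intro i
      exact EFAP.sw_on gp (Nat.lt_succ_iff.mp i.isLt)
    · intro r hr
      exact EFAP.sw_off (fun i hi => hr ⟨i, Nat.lt_succ_of_le hi⟩)
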